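/- Let T ∈ ℕ, and for t = 1,…,T+1 let V_t : B × X^f → ℝ be functions with V_{T+1} ≡ 0, where B is a set of belief pairs and X^f a finite set. Suppose a strategy profile (σ̃^f, σ̃^l) and belief system µ satisfy, for all t and all histories h_t^f = (a_{1:t-1}, x_{1:t}^f): (i) V_t(µ_t[a_{1:t-1}], x_t^f) = E^{σ̃^f σ̃^l}[ R_t^f(X_t,A_t) + V_{t+1}(µ_{t+1}[a_{1:t-1} A_t], X_{t+1}^f) | h_t^f ]; (ii) for every one-stage deviation σ_t^f, V_t(µ_t[a_{1:t-1}], x_t^f) ≥ E^{σ_t^f σ̃^l}[ R_t^f(X_t,A_t) + V_{t+1}(µ_{t+1}[a_{1:t-1} A_t], X_{t+1}^f) | h_t^f ]; and (iii) for every t and every σ^f, the conditional expectation of Σ_{n=t+1}^T R_n^f given (a_{1:t}, x_{1:t+1}^f) under (σ_{t:T}^f, σ̃_{t:T}^l) does not depend on σ_t^f. Then for all t, all histories, and all follower strategies σ^f, E^{σ̃^f σ̃^l}[ Σ_{n=t}^T R_n^f(X_n,A_n) | h_t^f ] ≥ E^{σ^f σ̃^l}[ Σ_{n=t}^T R_n^f(X_n,A_n)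 | h_t^f ], i.e., σ̃^f is a best response to σ̃^l at every follower history. -/

import Mathlib

open Finset

noncomputable section

/-- Update a trajectory at one time index. -/
def upd {α : Type} (h : ℕ → α) (t : ℕ) (v : α) : ℕ → α :=
  fun n => if n = t then v else h n

/-- Follower reward-to-go: expected total reward over `k` remaining stages starting at time
`t`, given the action history `a`, the follower type history `xfh`, and the current leader
type `xl`; the leader plays the (Markov) strategy `σl` and the follower the (history-based)
strategy `σf`; types evolve via the kernels `Ql`, `Qf`. -/
def rtgF {Xl Xf Al Af : Type} [Fintype Xl] [Fintype Xf] [Fintype Al] [Fintype Af]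
    (σl : ℕ → (ℕ → Al × Af) → Xl → Al → ℝ)
    (σf : ℕ → (ℕ → Al × Af) → (ℕ → Xf) → Af → ℝ)
    (Ql : Xl → Al × Af → Xl → ℝ) (Qf : Xf → Al × Af → Xf → ℝ)
    (Rf : ℕ → Xl × Xf → Al × Af → ℝ) :
    ℕ → ℕ → (ℕ → Al × Af) → (ℕ → Xf) → Xl → ℝ
  | 0, _, _, _, _ => 0
  | k + 1, t, a, xfh, xl =>
      ∑ al : Al, ∑ af : Af, σl t a xl al * σf t a xfh af *
        (Rf t (xl, xfh t) (al, af) +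
          ∑ xl' : Xl, ∑ xf' : Xf, Ql xl (al, af) xl' * Qf (xfh t) (al, af) xf' *
            rtgF σl σf Ql Qf Rf k (t + 1) (upd a t (al, af)) (upd xfh (t + 1) xf') xl')


private lemma sum_swap_mul {α β : Type*} [Fintype α] [Fintype β]
    (c : α → ℝ) (f : α → β → ℝ) :
    ∑ x, c x * ∑ y, f x y = ∑ y, ∑ x, c x * f x y := by
  simp_rw [Finset.mul_sum]
  exact Finset.sum_comm

private lemma expand2 {Xl Al Af Xf : Type} [Fintype Xl] [Fintype Al] [Fintype Af] [Fintype Xf]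
    (w : Xl → ℝ) (s : Xl → Al → ℝ) (q : Af → ℝ) (r : Xl → Al → Af → ℝ)
    (Q : Al → Af → Xf → ℝ) (Vn : Al → Af → Xf → ℝ) :
    ∑ xl, ∑ al, ∑ af, w xl * s xl al * q af * (r xl al af + ∑ xf', Q al af xf' * Vn al af xf')
      = ∑ al, ∑ af, q af *
          ((∑ xl, w xl * s xl al * r xl al af) +
            ∑ xf', Q al af xf' * ((∑ xl, w xl * s xl al) * Vn al af xf')) := by
  refine Finset.sum_comm.trans ?_
  refine Finset.sum_congr rfl fun al _ => ?_
  refine Finset.sum_comm.trans ?_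
  refine Finset.sum_congr rfl fun af _ => ?_
  have h1 : ∀ xl, w xl * s xl al * q af * (r xl al af + ∑ xf', Q al af xf' * Vn al af xf')
      = q af * (w xl * s xl al * r xl al af)
        + ∑ xf', q af * (Q al af xf' * (w xl * s xl al * Vn al af xf')) := by
    intro xl
    have : w xl * s xl al * q af * (r xl al af + ∑ xf', Q al af xf' * Vn al af xf')
        = q af * (w xl * s xl al * r xl al af)
          + (q af * (w xl * s xl al)) * ∑ xf', Q al af xf' * Vn al af xf' := by ring
    rw [this, Finset.mul_sum]
    congr 1
    exact Finset.sum_congr rfl fun xf' _ => by ring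
  calc ∑ xl, w xl * s xl al * q af * (r xl al af + ∑ xf', Q al af xf' * Vn al af xf')
      = (∑ xl, q af * (w xl * s xl al * r xl al af))
        + ∑ xl, ∑ xf', q af * (Q al af xf' * (w xl * s xl al * Vn al af xf')) := by
        rw [← Finset.sum_add_distrib]
        exact Finset.sum_congr rfl fun xl _ => h1 xl
    _ = q af * ((∑ xl, w xl * s xl al * r xl al af)
        + ∑ xf', Q al af xf' * ((∑ xl, w xl * s xl al) * Vn al af xf')) := by
        rw [mul_add, Finset.mul_sum, Finset.mul_sum]
        congr 1
        refine Finset.sum_comm.trans ?_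
        refine Finset.sum_congr rfl fun xf' _ => ?_
        simp_rw [← Finset.mul_sum, Finset.sum_mul]

private lemma expand1 {Xl Xf Al Af : Type} [Fintype Xl] [Fintype Xf] [Fintype Al] [Fintype Af]
    (σl : ℕ → (ℕ → Al × Af) → Xl → Al → ℝ)
    (σf : ℕ → (ℕ → Al × Af) → (ℕ → Xf) → Af → ℝ)
    (Ql : Xl → Al × Af → Xl → ℝ) (Qf : Xf → Al × Af → Xf → ℝ)
    (Rf : ℕ → Xl × Xf → Al × Af → ℝ)
    (w : Xl → ℝ) (k t : ℕ) (a : ℕ → Al × Af) (xfh : ℕ → Xf) :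
    ∑ xl, w xl * rtgF σl σf Ql Qf Rf (k + 1) t a xfh xl
      = ∑ al, ∑ af, σf t a xfh af *
          ((∑ xl, w xl * σl t a xl al * Rf t (xl, xfh t) (al, af)) +
            ∑ xf', Qf (xfh t) (al, af) xf' *
              ∑ xl, ∑ xl', w xl * σl t a xl al * Ql xl (al, af) xl' *
                rtgF σl σf Ql Qf Rf k (t + 1) (upd a t (al, af)) (upd xfh (t + 1) xf') xl') := by
  show ∑ xl, w xl * ∑ al, ∑ af, _ = _
  rw [sum_swap_mul]
  refine Finset.sum_congr rfl fun al _ => ?_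
  rw [sum_swap_mul]
  refine Finset.sum_congr rfl fun af _ => ?_
  have h1 : ∀ xl, w xl * (σl t a xl al * σf t a xfh af *
      (Rf t (xl, xfh t) (al, af) +
        ∑ xl' : Xl, ∑ xf' : Xf, Ql xl (al, af) xl' * Qf (xfh t) (al, af) xf' *
          rtgF σl σf Ql Qf Rf k (t + 1) (upd a t (al, af)) (upd xfh (t + 1) xf') xl'))
      = σf t a xfh af * (w xl * σl t a xl al * Rf t (xl, xfh t) (al, af))
        + ∑ xf', σf t a xfh af * (Qf (xfh t) (al, af) xf' *
            ∑ xl', w xl * σl t a xl al * Ql xl (al, af) xl' *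
              rtgF σl σf Ql Qf Rf k (t + 1) (upd a t (al, af)) (upd xfh (t + 1) xf') xl') := by
    intro xl
    have : w xl * (σl t a xl al * σf t a xfh af *
        (Rf t (xl, xfh t) (al, af) +
          ∑ xl' : Xl, ∑ xf' : Xf, Ql xl (al, af) xl' * Qf (xfh t) (al, af) xf' *
            rtgF σl σf Ql Qf Rf k (t + 1) (upd a t (al, af)) (upd xfh (t + 1) xf') xl'))
        = σf t a xfh af * (w xl * σl t a xl al * Rf t (xl, xfh t) (al, af))
          + (σf t a xfh af * (w xl * σl t a xl al)) *
            ∑ xl' : Xl, ∑ xf' : Xf, Ql xl (al, af) xl' * Qf (xfh t) (al, af) xf' *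
              rtgF σl σf Ql Qf Rf k (t + 1) (upd a t (al, af)) (upd xfh (t + 1) xf') xl' := by
      ring
    rw [this]
    congr 1
    simp_rw [Finset.mul_sum]
    refine Finset.sum_comm.trans ?_
    exact Finset.sum_congr rfl fun xf' _ => Finset.sum_congr rfl fun xl' _ => by ring
  calc ∑ xl, w xl * (σl t a xl al * σf t a xfh af *
      (Rf t (xl, xfh t) (al, af) +
        ∑ xl' : Xl, ∑ xf' : Xf, Ql xl (al, af) xl' * Qf (xfh t) (al, af) xf' *
          rtgF σl σf Ql Qf Rf k (t + 1) (upd a t (al, af)) (upd xfh (t + 1) xf') xl'))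
      = (∑ xl, σf t a xfh af * (w xl * σl t a xl al * Rf t (xl, xfh t) (al, af)))
        + ∑ xl, ∑ xf', σf t a xfh af * (Qf (xfh t) (al, af) xf' *
            ∑ xl', w xl * σl t a xl al * Ql xl (al, af) xl' *
              rtgF σl σf Ql Qf Rf k (t + 1) (upd a t (al, af)) (upd xfh (t + 1) xf') xl') := by
        rw [← Finset.sum_add_distrib]
        exact Finset.sum_congr rfl fun xl _ => h1 xl
    _ = _ := by
        rw [mul_add, Finset.mul_sum, Finset.mul_sum]
        congr 1
        refine Finset.sum_comm.trans ?_
        refine Finset.sum_congr rfl fun xf' _ => ?_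
        simp_rw [← Finset.mul_sum]

/-- backward-induction verification theorem (follower part of the main
theorem).  If the value functions satisfy (i) the Bellman equality along the equilibrium
strategy, (ii) the Bellman inequality against every one-stage deviation, and (iii) the
continuation payoff from `t+1` on, conditioned on the stage-`t` action and next follower
type, coincides with the payoff restarted from the updated belief (hence does not depend on
the time-`t` follower strategy), then the equilibrium follower strategy `σtf` is a best
response to the leader strategy `σl` at every follower history. -/
theorem follower_verification
    {Xl Xf Al Af : Type} [Fintype Xl] [Fintype Xf] [Fintype Al] [Fintype Af]
    (T : ℕ)
    (σl : ℕ → (ℕ → Al × Af) → Xl → Al → ℝ)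
    (σtf : ℕ → (ℕ → Al × Af) → (ℕ → Xf) → Af → ℝ)
    (Ql : Xl → Al × Af → Xl → ℝ) (Qf : Xf → Al × Af → Xf → ℝ)
    (Rf : ℕ → Xl × Xf → Al × Af → ℝ)
    (μ : ℕ → (ℕ → Al × Af) → Xl → ℝ)
    (V : ℕ → (ℕ → Al × Af) → Xf → ℝ)
    -- probability hypotheses
    (hμ : ∀ t a, (∀ xl, 0 ≤ μ t a xl) ∧ ∑ xl, μ t a xl = 1)
    (hσl : ∀ t a xl, (∀ al, 0 ≤ σl t a xl al) ∧ ∑ al, σl t a xl al = 1)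
    (hσtf : ∀ t a xfh, (∀ af, 0 ≤ σtf t a xfh af) ∧ ∑ af, σtf t a xfh af = 1)
    (hQl : ∀ x u, (∀ x', 0 ≤ Ql x u x') ∧ ∑ x', Ql x u x' = 1)
    (hQf : ∀ x u, (∀ x', 0 ≤ Qf x u x') ∧ ∑ x', Qf x u x' = 1)
    -- terminal condition
    (hVT : ∀ a xf, V T a xf = 0)
    -- (i) one-stage Bellman equality along the equilibrium strategy
    (hi : ∀ t, t < T → ∀ (a : ℕ → Al × Af) (xfh : ℕ → Xf),
      V t a (xfh t) =
        ∑ xl : Xl, ∑ al : Al, ∑ af : Af,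
          μ t a xl * σl t a xl al * σtf t a xfh af *
            (Rf t (xl, xfh t) (al, af) +
              ∑ xf' : Xf, Qf (xfh t) (al, af) xf' * V (t + 1) (upd a t (al, af)) xf'))
    -- (ii) one-stage deviation inequality
    (hii : ∀ t, t < T → ∀ (a : ℕ → Al × Af) (xfh : ℕ → Xf) (q : Af → ℝ),
      (∀ af, 0 ≤ q af) → (∑ af, q af = 1) →
      (∑ xl : Xl, ∑ al : Al, ∑ af : Af,
          μ t a xl * σl t a xl al * q af *
            (Rf t (xl, xfh t) (al, af) +
              ∑ xf' : Xf, Qf (xfh t) (al, af) xf' * V (t + 1) (upd a t (al, af)) xf'))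
        ≤ V t a (xfh t))
    -- (iii) strategy-independence of the continuation payoff: conditioning the
    -- time-(t+1) continuation on (a_{1:t}, x_{1:t+1}^f) and restarting it from the
    -- updated belief μ_{t+1} give the same value, for every follower strategy
    (hiii : ∀ (σf : ℕ → (ℕ → Al × Af) → (ℕ → Xf) → Af → ℝ),
      (∀ t a xfh, (∀ af, 0 ≤ σf t a xfh af) ∧ ∑ af, σf t a xfh af = 1) →
      ∀ t, t < T → ∀ (a : ℕ → Al × Af) (xfh : ℕ → Xf) (al : Al) (af : Af) (xf' : Xf),
      (∑ xl : Xl, ∑ xl' : Xl, μ t a xl * σl t a xl al * Ql xl (al, af) xl' *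
          rtgF σl σf Ql Qf Rf (T - (t + 1)) (t + 1)
            (upd a t (al, af)) (upd xfh (t + 1) xf') xl')
        = (∑ xl : Xl, μ t a xl * σl t a xl al) *
          ∑ xl' : Xl, μ (t + 1) (upd a t (al, af)) xl' *
            rtgF σl σf Ql Qf Rf (T - (t + 1)) (t + 1)
              (upd a t (al, af)) (upd xfh (t + 1) xf') xl') :
    -- conclusion: σtf is a best response at every follower history
    ∀ (σf : ℕ → (ℕ → Al × Af) → (ℕ → Xf) → Af → ℝ),
      (∀ t a xfh, (∀ af, 0 ≤ σf t a xfh af) ∧ ∑ af, σf t a xfh af = 1) →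
      ∀ t, t ≤ T → ∀ (a : ℕ → Al × Af) (xfh : ℕ → Xf),
        (∑ xl, μ t a xl * rtgF σl σf Ql Qf Rf (T - t) t a xfh xl)
          ≤ ∑ xl, μ t a xl * rtgF σl σtf Ql Qf Rf (T - t) t a xfh xl := by
  have E : ∀ k, ∀ t, t + k = T → ∀ (a : ℕ → Al × Af) (xfh : ℕ → Xf),
      ∑ xl, μ t a xl * rtgF σl σtf Ql Qf Rf k t a xfh xl = V t a (xfh t) := by
    intro k
    induction k with
    | zero =>
      intro t ht a xfh
      have htT : t = T := by omega
      subst htT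
      simp [rtgF, hVT]
    | succ k ih =>
      intro t ht a xfh
      have hlt : t < T := by omega
      have hk : T - (t + 1) = k := by omega
      rw [expand1, hi t hlt a xfh]
      have e2 : (∑ xl : Xl, ∑ al : Al, ∑ af : Af,
          μ t a xl * σl t a xl al * σtf t a xfh af *
            (Rf t (xl, xfh t) (al, af) +
              ∑ xf' : Xf, Qf (xfh t) (al, af) xf' * V (t + 1) (upd a t (al, af)) xf'))
          = ∑ al, ∑ af, σtf t a xfh af *
              ((∑ xl, μ t a xl * σl t a xl al * Rf t (xl, xfh t) (al, af)) +
                ∑ xf', Qf (xfh t) (al, af) xf' *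
                  ((∑ xl, μ t a xl * σl t a xl al) * V (t + 1) (upd a t (al, af)) xf')) :=
        expand2 (μ t a) (fun xl al => σl t a xl al) (σtf t a xfh)
          (fun xl al af => Rf t (xl, xfh t) (al, af))
          (fun al af xf' => Qf (xfh t) (al, af) xf')
          (fun al af xf' => V (t + 1) (upd a t (al, af)) xf')
      rw [e2]
      refine Finset.sum_congr rfl fun al _ => Finset.sum_congr rfl fun af _ => ?_
      congr 1
      congr 1
      refine Finset.sum_congr rfl fun xf' _ => ?_
      congr 1
      have h3 := hiii σtf hσtf t hlt a xfh al af xf'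
      rw [hk] at h3
      rw [h3]
      congr 1
      have ihv := ih (t + 1) (by omega) (upd a t (al, af)) (upd xfh (t + 1) xf')
      rw [ihv]
      congr 1
      simp [upd]
  intro σf hσf
  have M : ∀ k, ∀ t, t + k = T → ∀ (a : ℕ → Al × Af) (xfh : ℕ → Xf),
      ∑ xl, μ t a xl * rtgF σl σf Ql Qf Rf k t a xfh xl ≤ V t a (xfh t) := by
    intro k
    induction k with
    | zero =>
      intro t ht a xfh
      have htT : t = T := by omega
      subst htT
      simp [rtgF, hVT]
    | succ k ih =>
      intro t ht a xfh
      have hlt : t < T := by omega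
      have hk : T - (t + 1) = k := by omega
      rw [expand1]
      have e2 : (∑ xl : Xl, ∑ al : Al, ∑ af : Af,
          μ t a xl * σl t a xl al * σf t a xfh af *
            (Rf t (xl, xfh t) (al, af) +
              ∑ xf' : Xf, Qf (xfh t) (al, af) xf' * V (t + 1) (upd a t (al, af)) xf'))
          = ∑ al, ∑ af, σf t a xfh af *
              ((∑ xl, μ t a xl * σl t a xl al * Rf t (xl, xfh t) (al, af)) +
                ∑ xf', Qf (xfh t) (al, af) xf' *
                  ((∑ xl, μ t a xl * σl t a xl al) * V (t + 1) (upd a t (al, af)) xf')) :=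
        expand2 (μ t a) (fun xl al => σl t a xl al) (σf t a xfh)
          (fun xl al af => Rf t (xl, xfh t) (al, af))
          (fun al af xf' => Qf (xfh t) (al, af) xf')
          (fun al af xf' => V (t + 1) (upd a t (al, af)) xf')
      calc ∑ al, ∑ af, σf t a xfh af *
              ((∑ xl, μ t a xl * σl t a xl al * Rf t (xl, xfh t) (al, af)) +
                ∑ xf', Qf (xfh t) (al, af) xf' *
                  ∑ xl, ∑ xl', μ t a xl * σl t a xl al * Ql xl (al, af) xl' *
                    rtgF σl σf Ql Qf Rf k (t + 1) (upd a t (al, af)) (upd xfh (t + 1) xf') xl')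
          ≤ ∑ al, ∑ af, σf t a xfh af *
              ((∑ xl, μ t a xl * σl t a xl al * Rf t (xl, xfh t) (al, af)) +
                ∑ xf', Qf (xfh t) (al, af) xf' *
                  ((∑ xl, μ t a xl * σl t a xl al) * V (t + 1) (upd a t (al, af)) xf')) := by
            refine Finset.sum_le_sum fun al _ => Finset.sum_le_sum fun af _ => ?_
            refine mul_le_mul_of_nonneg_left ?_ ((hσf t a xfh).1 af)
            refine add_le_add le_rfl ?_
            refine Finset.sum_le_sum fun xf' _ => ?_
            refine mul_le_mul_of_nonneg_left ?_ ((hQf (xfh t) (al, af)).1 xf')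
            have h3 := hiii σf hσf t hlt a xfh al af xf'
            rw [hk] at h3
            rw [h3]
            refine mul_le_mul_of_nonneg_left ?_ ?_
            · have ihv := ih (t + 1) (by omega) (upd a t (al, af)) (upd xfh (t + 1) xf')
              have hx : (upd xfh (t + 1) xf') (t + 1) = xf' := by simp [upd]
              rw [hx] at ihv
              exact ihv
            · exact Finset.sum_nonneg fun xl _ =>
                mul_nonneg ((hμ t a).1 xl) ((hσl t a xl).1 al)
        _ = _ := e2.symm
        _ ≤ V t a (xfh t) :=
            hii t hlt a xfh (σf t a xfh) (hσf t a xfh).1 (hσf t a xfh).2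
  intro t htT a xfh
  have h1 := M (T - t) t (by omega) a xfh
  have h2 := E (T - t) t (by omega) a xfh
  rw [h2]
  exact h1


end
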